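/- Let d ≥ 2 and N ≥ 1 be integers with d = N + 1 and d prime, let ζ ∈ ℂ be a primitive M̄-th root of unity, and let k be an integer not divisible by M̄. Let v : Fin (N+1) → ℂ be not identically zero and satisfy the loop hypersurface equation ∑_{j ∈ Fin(N+1)} v_j^{d−1} · v_{j+1} = 0 (index j+1 cyclic in Fin (N+1)). Then there exists λ ∈ ℂ with ζ^{k·u_i} · v_i = λ · v_i for every i if and only if there exists an index i₀ such that v_j = 0 for all j ≠ i₀. Moreover every such coordinate vector does satisfy the loop hypersurface equation, so the fixed locus of every nonzero group element acting on the loop hypersurface X ⊂ ℙ^N consists exactly of the N+1 coordinate points, and coincides with the fixed locus on the ambient ℙ^N. -/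

import Mathlib

open Finset

private def uSeq (d : ℕ) (m : ℕ) : ℤ := ∑ l ∈ Finset.range m, (1 - (d : ℤ)) ^ l

private lemma uSeq_mul (d m : ℕ) : (d : ℤ) * uSeq d m = 1 - (1 - (d : ℤ)) ^ m := by
  have := geom_sum_mul (1 - (d : ℤ)) m
  unfold uSeq
  linarith [this]

private lemma uSeq_add (d i m : ℕ) :
    uSeq d (i + m) = uSeq d i + (1 - (d : ℤ)) ^ i * uSeq d m := by
  induction m with
  | zero => simp [uSeq]
  | succ m ih =>
      have h1 : uSeq d (i + (m+1)) = uSeq d (i + m) + (1 - (d:ℤ)) ^ (i + m) := by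
        rw [show i + (m+1) = (i+m)+1 by ring]
        simp [uSeq, Finset.sum_range_succ]
      have h2 : uSeq d (m+1) = uSeq d m + (1 - (d:ℤ)) ^ m := by
        simp [uSeq, Finset.sum_range_succ]
      rw [h1, ih, h2]; ring

private lemma coprime_M_t (d N : ℕ) (hdN : d = N + 1) :
    IsCoprime (uSeq d (N + 1)) (1 - (d : ℤ)) := by
  refine ⟨(d : ℤ), (1 - (d : ℤ)) ^ N, ?_⟩
  have := uSeq_mul d (N + 1)
  have hpow : (1 - (d:ℤ)) ^ (N+1) = (1 - (d:ℤ)) ^ N * (1 - (d:ℤ)) := by ring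
  linarith [this, hpow]

private lemma coprime_M_u (d N : ℕ) (hd : 2 ≤ d) (hdN : d = N + 1) (hp : Nat.Prime d)
    (m : ℕ) (hm1 : 1 ≤ m) (hm2 : m ≤ N) :
    IsCoprime (uSeq d (N + 1)) (uSeq d m) := by
  rw [Int.isCoprime_iff_gcd_eq_one]
  by_contra h
  obtain ⟨p, pp, hpdvd⟩ := Nat.exists_prime_and_dvd h
  have hpM : (p : ℤ) ∣ uSeq d (N + 1) :=
    dvd_trans (Int.natCast_dvd_natCast.mpr hpdvd) (Int.gcd_dvd_left _ _)
  have hpu : (p : ℤ) ∣ uSeq d m :=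
    dvd_trans (Int.natCast_dvd_natCast.mpr hpdvd) (Int.gcd_dvd_right _ _)
  haveI : Fact p.Prime := ⟨pp⟩
  set T : ZMod p := ((1 - (d : ℤ) : ℤ) : ZMod p) with hT
  have hTm : T ^ m = 1 := by
    have := congrArg (fun z : ℤ => (z : ZMod p)) (uSeq_mul d m)
    simp only [Int.cast_mul, Int.cast_sub, Int.cast_one, Int.cast_pow] at this
    rw [(ZMod.intCast_zmod_eq_zero_iff_dvd _ _).mpr hpu] at this
    push_cast at this ⊢
    rw [hT]; push_cast
    linear_combination this
  have hTN : T ^ (N + 1) = 1 := by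
    have := congrArg (fun z : ℤ => (z : ZMod p)) (uSeq_mul d (N + 1))
    simp only [Int.cast_mul, Int.cast_sub, Int.cast_one, Int.cast_pow] at this
    rw [(ZMod.intCast_zmod_eq_zero_iff_dvd _ _).mpr hpM] at this
    rw [hT]; push_cast at this ⊢
    linear_combination this
  have hcop : Nat.Coprime m (N + 1) := by
    have : ¬ d ∣ m := by
      intro hdm
      rcases hdm with ⟨c, rfl⟩
      rcases Nat.eq_zero_or_pos c with rfl | hc
      · omega
      · nlinarith
    rw [← hdN]
    exact ((hp.coprime_iff_not_dvd).mpr this).symm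
  have hord : orderOf T = 1 := by
    have h1 := orderOf_dvd_of_pow_eq_one hTm
    have h2 := orderOf_dvd_of_pow_eq_one hTN
    have := Nat.dvd_gcd h1 h2
    rwa [hcop, Nat.dvd_one] at this
  have hT1 : T = 1 := orderOf_eq_one_iff.mp hord
  have hpd : (p : ℤ) ∣ (d : ℤ) := by
    have : ((1 - (d:ℤ) - 1 : ℤ) : ZMod p) = 0 := by
      push_cast
      rw [hT] at hT1
      push_cast at hT1
      linear_combination hT1
    have h1 := (ZMod.intCast_zmod_eq_zero_iff_dvd _ _).mp this
    have h2 : (1 - (d:ℤ) - 1) = -(d:ℤ) := by ring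
    rw [h2] at h1
    exact dvd_neg.mp h1
  have hpd' : p ∣ d := Int.ofNat_dvd.mp hpd
  have hpeq : p = d := (Nat.prime_dvd_prime_iff_eq pp hp).mp hpd'
  subst hpeq
  have h3 : ((uSeq p m : ℤ) : ZMod p) = 0 := (ZMod.intCast_zmod_eq_zero_iff_dvd _ _).mpr hpu
  have h4 : ((uSeq p m : ℤ) : ZMod p) = ((m:ℕ) : ZMod p) := by
    unfold uSeq
    push_cast
    rw [ZMod.natCast_self]
    simp
  have hm0 : ((m : ℕ) : ZMod p) = 0 := by rw [← h4]; exact h3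
  have : p ∣ m := (ZMod.natCast_eq_zero_iff _ _).mp hm0
  have := Nat.le_of_dvd (by omega) this
  omega

/-- For `d = N + 1` prime, `ζ` a primitive `M̄`-th root of unity and `k` not divisible by `M̄`:
a nonzero vector `v` on the loop hypersurface is an eigenvector of the diagonal map with
entries `ζ^{k·u_i}` iff it is supported at a single coordinate; moreover every vector supported
at a single coordinate satisfies the loop hypersurface equation, so the fixed locus on the
hypersurface consists exactly of the coordinate points and agrees with that on `ℙ^N`. -/
theorem fixed_locus_loop_hypersurface (d N : ℕ) (hd : 2 ≤ d) (hN : 1 ≤ N)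
    (hdN : d = N + 1) (hp : Nat.Prime d) (ζ : ℂ)
    (hζ : IsPrimitiveRoot ζ (∑ l ∈ Finset.range (N + 1), (1 - (d : ℤ)) ^ l).natAbs)
    (k : ℤ)
    (hk : ¬ (((∑ l ∈ Finset.range (N + 1), (1 - (d : ℤ)) ^ l).natAbs : ℤ) ∣ k))
    (v : Fin (N + 1) → ℂ) (hv : v ≠ 0)
    (hX : ∑ j : Fin (N + 1), v j ^ (d - 1) * v (j + 1) = 0) :
    ((∃ lam : ℂ, ∀ i : Fin (N + 1),
        ζ ^ (k * ∑ l ∈ Finset.range (i : ℕ), (1 - (d : ℤ)) ^ l) * v i = lam * v i) ↔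
      ∃ i₀ : Fin (N + 1), ∀ j : Fin (N + 1), j ≠ i₀ → v j = 0) ∧
    (∀ (w : Fin (N + 1) → ℂ) (i₀ : Fin (N + 1)), (∀ j : Fin (N + 1), j ≠ i₀ → w j = 0) →
      ∑ j : Fin (N + 1), w j ^ (d - 1) * w (j + 1) = 0) := by
  have hζ' : IsPrimitiveRoot ζ (uSeq d (N + 1)).natAbs := hζ
  have hk' : ¬ (((uSeq d (N + 1)).natAbs : ℤ) ∣ k) := hk
  constructor
  · constructor
    · rintro ⟨lam, hlam⟩
      by_contra hcon
      push_neg at hcon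
      obtain ⟨i, hi⟩ : ∃ i, v i ≠ 0 := by
        by_contra h; push_neg at h; exact hv (funext h)
      obtain ⟨j, hji, hj⟩ := hcon i
      -- produce a < b with v a ≠ 0, v b ≠ 0
      obtain ⟨a, b, hab, hva, hvb⟩ :
          ∃ a b : Fin (N + 1), (a : ℕ) < (b : ℕ) ∧ v a ≠ 0 ∧ v b ≠ 0 := by
        have hne : (j : ℕ) ≠ (i : ℕ) := fun h => hji (Fin.ext h)
        rcases Nat.lt_or_ge (j : ℕ) (i : ℕ) with h | h
        · exact ⟨j, i, h, hj, hi⟩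
        · exact ⟨i, j, by omega, hi, hj⟩
      have ha' : ζ ^ (k * uSeq d (a : ℕ)) = lam := mul_right_cancel₀ hva (hlam a)
      have hb' : ζ ^ (k * uSeq d (b : ℕ)) = lam := mul_right_cancel₀ hvb (hlam b)
      have heq : ζ ^ (k * uSeq d (a : ℕ)) = ζ ^ (k * uSeq d (b : ℕ)) := by rw [ha', hb']
      set m : ℕ := (b : ℕ) - (a : ℕ) with hm
      have hm1 : 1 ≤ m := by omega
      have hm2 : m ≤ N := by have := b.isLt; omega
      have hζ0 : ζ ≠ 0 := by
        intro h0
        subst h0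
        have hMn : (uSeq d (N + 1)).natAbs = 0 := by
          by_contra hMn0
          have h1 := hζ'.pow_eq_one
          rw [zero_pow hMn0] at h1
          exact one_ne_zero h1.symm
        have hM0 : uSeq d (N + 1) = 0 := Int.natAbs_eq_zero.mp hMn
        have hpow : ((1 : ℤ) - d) ^ (N + 1) = 1 := by
          have := uSeq_mul d (N + 1)
          rw [hM0] at this
          linarith
        have habs : ((1 : ℤ) - d).natAbs ^ (N + 1) = 1 := by
          have := congrArg Int.natAbs hpow
          rwa [Int.natAbs_pow] at this
        have hd1 : ((1 : ℤ) - d).natAbs = d - 1 := by omega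
        rw [hd1] at habs
        have hd2 : d = 2 := by
          have := pow_eq_one_iff.mp habs
          omega
        have hN1 : N = 1 := by omega
        have hk0 : k ≠ 0 := by
          intro hk0
          exact hk' (by rw [hMn, hk0]; simp)
        have hb1 : (b : ℕ) = 1 := by have := b.isLt; omega
        have ha0 : (a : ℕ) = 0 := by omega
        rw [ha0, hb1] at heq
        have hu0 : uSeq d 0 = 0 := by simp [uSeq]
        have hu1 : uSeq d 1 = 1 := by simp [uSeq]
        rw [hu0, hu1, mul_zero, mul_one, zpow_zero, zero_zpow k hk0] at heq
        exact one_ne_zero heq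
      have hone : ζ ^ (k * uSeq d (b : ℕ) - k * uSeq d (a : ℕ)) = 1 := by
        rw [zpow_sub₀ hζ0, ← heq, div_self (zpow_ne_zero _ hζ0)]
      have hdvd : ((uSeq d (N + 1)).natAbs : ℤ) ∣
          (k * uSeq d (b : ℕ) - k * uSeq d (a : ℕ)) :=
        (hζ'.zpow_eq_one_iff_dvd _).mp hone
      have hMdvd : uSeq d (N + 1) ∣ (k * uSeq d (b : ℕ) - k * uSeq d (a : ℕ)) :=
        Int.natAbs_dvd.mp hdvd
      have hrw : k * uSeq d (b : ℕ) - k * uSeq d (a : ℕ)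
          = k * ((1 - (d : ℤ)) ^ (a : ℕ) * uSeq d m) := by
        have h5 := uSeq_add d (a : ℕ) m
        rw [show (a : ℕ) + m = (b : ℕ) by omega] at h5
        linear_combination k * h5
      rw [hrw] at hMdvd
      have hc : IsCoprime (uSeq d (N + 1)) ((1 - (d : ℤ)) ^ (a : ℕ) * uSeq d m) :=
        ((coprime_M_t d N hdN).pow_right).mul_right (coprime_M_u d N hd hdN hp m hm1 hm2)
      have : uSeq d (N + 1) ∣ k := hc.dvd_of_dvd_mul_right hMdvd
      exact hk' (Int.natAbs_dvd.mpr this)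
    · rintro ⟨i₀, hi₀⟩
      refine ⟨ζ ^ (k * uSeq d (i₀ : ℕ)), fun i => ?_⟩
      by_cases h : i = i₀
      · subst h; rfl
      · rw [hi₀ i h, mul_zero, mul_zero]
  · intro w i₀ hw
    apply Finset.sum_eq_zero
    intro j _
    by_cases hj : j = i₀
    · subst hj
      have hne : j + 1 ≠ j := by
        intro hcl
        have h1 := congrArg Fin.val hcl
        rw [Fin.val_add_one] at h1
        split_ifs at h1 with h
        · rw [h] at h1
          simp [Fin.val_last] at h1
          omega
        · omega
      rw [hw (j + 1) hne, mul_zero]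
    · rw [hw j hj, zero_pow (by omega : d - 1 ≠ 0), zero_mul]
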